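/- arXiv:1904.10789 — 9 statements merged into one kernel-verified Lean document; each statement's English description precedes it below -/
import Mathlib

section
/- Let $B\subseteq\mathbb{F}_2^n$ be a set with $|B|=2$ or $|B|=4$. Then $B=B_d(0,r)$ for some TS-metric $d$ on $\mathbb{F}_2^n$ and some $r>0$ if and only if $B$ has one of the following forms: $B=\{0,e_i\}$ for some $i$; $B=\{0,e_i,e_j,e_k\}$ for pairwise distinct $i,j,k$; or $B=\{0,e_i,e_j,e_i+e_j\}$ for $i\neq j$. -/
abbrev V (n : ℕ) := Fin n → ZMod 2

/-- The support of a vector. -/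
def supp {n : ℕ} (x : V n) : Set (Fin n) := {i | x i ≠ 0}

/-- The standard basis vector `e i`. -/
def e {n : ℕ} (i : Fin n) : V n := Pi.single i 1

/-- `d` is a metric on `𝔽₂ⁿ`. -/
def IsMetric {n : ℕ} (d : V n → V n → ℝ) : Prop :=
  (∀ x y, 0 ≤ d x y) ∧ (∀ x y, d x y = 0 ↔ x = y) ∧
  (∀ x y, d x y = d y x) ∧ (∀ x y z, d x z ≤ d x y + d y z)

/-- `d` is translation-invariant. -/
def TransInv {n : ℕ} (d : V n → V n → ℝ) : Prop :=
  ∀ x y z : V n, d (x + z) (y + z) = d x y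

/-- The weight of `d` respects supports. -/
def RespectsSupport {n : ℕ} (d : V n → V n → ℝ) : Prop :=
  ∀ x y : V n, supp x ⊆ supp y → d x 0 ≤ d y 0

/-- A TS-metric: a translation-invariant metric respecting supports. -/
def IsTSMetric {n : ℕ} (d : V n → V n → ℝ) : Prop :=
  IsMetric d ∧ TransInv d ∧ RespectsSupport d

/-- The ball of center `x` and radius `r`. -/
def ball {n : ℕ} (d : V n → V n → ℝ) (x : V n) (r : ℝ) : Set (V n) :=
  {y | d x y ≤ r}

section aux
variable {n : ℕ}

lemma zmod2_cases' : ∀ a : ZMod 2, a = 0 ∨ a = 1 := by decide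
lemma zmod2_cases (a : ZMod 2) : a = 0 ∨ a = 1 := zmod2_cases' a

lemma Vadd_self (x : V n) : x + x = 0 := by
  funext i
  have : ∀ a : ZMod 2, a + a = 0 := by decide
  exact this (x i)

lemma Vadd_eq_zero {x y : V n} : x + y = 0 ↔ x = y := by
  constructor
  · intro h
    have : x + y + y = 0 + y := by rw [h]
    simpa [add_assoc, Vadd_self] using this
  · rintro rfl; exact Vadd_self x

lemma e_apply_self (i : Fin n) : e i i = 1 := by simp [e]

lemma e_apply_ne {i k : Fin n} (h : k ≠ i) : e i k = 0 := by
  simp [e, Pi.single_apply, h]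

lemma e_ne_zero (i : Fin n) : e i ≠ 0 := by
  intro h
  have := congrFun h i
  rw [e_apply_self] at this
  exact one_ne_zero this

lemma supp_e (i : Fin n) : supp (e i) ⊆ {i} := by
  intro k hk
  by_contra h
  exact hk (e_apply_ne h)

lemma eq_zero_of_supp_empty {x : V n} (h : supp x ⊆ (∅ : Set (Fin n))) : x = 0 := by
  funext k
  by_contra hk
  exact h hk

lemma supp_subset_singleton {x : V n} {i : Fin n} (h : supp x ⊆ {i}) :
    x = 0 ∨ x = e i := by
  rcases zmod2_cases (x i) with h0 | h1
  · left
    funext k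
    by_contra hk
    have : k = i := h hk
    exact hk (this ▸ h0)
  · right
    funext k
    by_cases hki : k = i
    · rw [hki, h1, e_apply_self]
    · rw [e_apply_ne hki]
      by_contra hk
      exact hki (h hk)

lemma supp_subset_pair {x : V n} {i j : Fin n} (hij : i ≠ j)
    (h : supp x ⊆ {i, j}) :
    x = 0 ∨ x = e i ∨ x = e j ∨ x = e i + e j := by
  have hother : ∀ k, k ≠ i → k ≠ j → x k = 0 := by
    intro k hki hkj
    by_contra hk
    rcases h hk with h' | h' <;> [exact hki h'; exact hkj h']
  rcases zmod2_cases (x i) with hi0 | hi1 <;> rcases zmod2_cases (x j) with hj0 | hj1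
  · left; funext k
    by_cases hki : k = i
    · rw [hki]; exact hi0
    by_cases hkj : k = j
    · rw [hkj]; exact hj0
    exact hother k hki hkj
  · right; right; left; funext k
    by_cases hki : k = i
    · rw [hki, e_apply_ne hij]; exact hi0
    by_cases hkj : k = j
    · rw [hkj, hj1, e_apply_self]
    · rw [e_apply_ne hkj]; exact hother k hki hkj
  · right; left; funext k
    by_cases hki : k = i
    · rw [hki, hi1, e_apply_self]
    by_cases hkj : k = j
    · rw [hkj, e_apply_ne (Ne.symm hij)]; exact hj0
    · rw [e_apply_ne hki]; exact hother k hki hkj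
  · right; right; right; funext k
    show x k = e i k + e j k
    by_cases hki : k = i
    · rw [hki, hi1, e_apply_self, e_apply_ne hij]; ring
    by_cases hkj : k = j
    · rw [hkj, hj1, e_apply_self, e_apply_ne (Ne.symm hij)]; ring
    · rw [e_apply_ne hki, e_apply_ne hkj, hother k hki hkj]; ring

lemma e_inj {i j : Fin n} (h : e i = e j) : i = j := by
  by_contra hij
  have := congrFun h i
  rw [e_apply_self, e_apply_ne hij] at this
  exact one_ne_zero this

lemma eij_ne_zero {i j : Fin n} (hij : i ≠ j) : e i + e j ≠ 0 := by
  intro h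
  have := congrFun h i
  rw [Pi.add_apply, e_apply_self, e_apply_ne hij, Pi.zero_apply] at this
  have h10 : (1 : ZMod 2) + 0 ≠ 0 := by decide
  exact h10 this

lemma eij_ne_ei {i j : Fin n} (hij : i ≠ j) : e i + e j ≠ e i := by
  intro h
  have := congrFun h j
  rw [Pi.add_apply, e_apply_self, e_apply_ne (Ne.symm hij)] at this
  have h01 : (0 : ZMod 2) + 1 ≠ 0 := by decide
  exact h01 this

lemma eij_ne_ej {i j : Fin n} (hij : i ≠ j) : e i + e j ≠ e j := by
  intro h
  have := congrFun h i
  rw [Pi.add_apply, e_apply_self, e_apply_ne hij] at this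
  have h10 : (1 : ZMod 2) + 0 ≠ 0 := by decide
  exact h10 this

end aux

/-- The key construction: a down-closed set containing 0 is a ball of a TS-metric. -/
lemma construct {n : ℕ} (B : Set (V n)) (h0 : (0 : V n) ∈ B)
    (hdc : ∀ x y : V n, y ∈ B → supp x ⊆ supp y → x ∈ B) :
    ∃ (d : V n → V n → ℝ) (r : ℝ), IsTSMetric d ∧ 0 < r ∧ B = ball d 0 r := by
  classical
  set w : V n → ℝ := fun v => if v = 0 then 0 else if v ∈ B then 1 else 2 with hw
  have hw_nonneg : ∀ v, 0 ≤ w v := by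
    intro v; simp only [hw]; split_ifs <;> norm_num
  have hw_zero : ∀ v, w v = 0 ↔ v = 0 := by
    intro v; simp only [hw]; split_ifs with h <;> simp [h]
  have hw_pos : ∀ v, v ≠ 0 → 1 ≤ w v := by
    intro v hv; simp only [hw]; split_ifs <;> norm_num; exact hv ‹_›
  have hw_le : ∀ v, w v ≤ 2 := by
    intro v; simp only [hw]; split_ifs <;> norm_num
  have hw_tri : ∀ a b, w (a + b) ≤ w a + w b := by
    intro a b
    by_cases ha : a = 0
    · subst ha; rw [zero_add]
      simpa [hw] using hw_nonneg b
    by_cases hb : b = 0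
    · subst hb; rw [add_zero]
      simpa [hw] using hw_nonneg a
    calc w (a + b) ≤ 2 := hw_le _
    _ = 1 + 1 := by norm_num
    _ ≤ w a + w b := add_le_add (hw_pos a ha) (hw_pos b hb)
  refine ⟨fun x y => w (x + y), 1, ⟨⟨?_, ?_, ?_, ?_⟩, ?_, ?_⟩, one_pos, ?_⟩
  · intro x y; exact hw_nonneg _
  · intro x y; show w (x + y) = 0 ↔ x = y; rw [hw_zero]; exact Vadd_eq_zero
  · intro x y; show w (x + y) = w (y + x); rw [add_comm]
  · intro x y z
    show w (x + z) ≤ w (x + y) + w (y + z)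
    have h1 : x + z = (x + y) + (y + z) := by
      funext t
      have : ∀ a b c : ZMod 2, a + c = (a + b) + (b + c) := by decide
      exact this (x t) (y t) (z t)
    rw [h1]; exact hw_tri _ _
  · intro x y z
    show w (x + z + (y + z)) = w (x + y)
    have h1 : x + z + (y + z) = x + y := by
      funext t
      have : ∀ a b c : ZMod 2, (a + c) + (b + c) = a + b := by decide
      exact this (x t) (y t) (z t)
    rw [h1]
  · intro x y hxy
    show w (x + 0) ≤ w (y + 0)
    rw [add_zero, add_zero]
    by_cases hx : x = 0
    · subst hx
      simpa [hw] using hw_nonneg y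
    have hy : y ≠ 0 := by
      intro hy; subst hy
      exact hx (eq_zero_of_supp_empty (by simpa [supp] using hxy))
    simp only [hw]
    rw [if_neg hx, if_neg hy]
    by_cases hxB : x ∈ B
    · rw [if_pos hxB]; split_ifs <;> norm_num
    · rw [if_neg hxB]
      have hyB : y ∉ B := fun hyB => hxB (hdc x y hyB hxy)
      rw [if_neg hyB]
  · ext y
    show y ∈ B ↔ w (0 + y) ≤ 1
    rw [zero_add]
    simp only [hw]
    split_ifs with h1 h2
    · subst h1
      simp only [h0, true_iff]
      norm_num
    · simp [h2]
    · constructor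
      · intro h; exact absurd h h2
      · intro h; norm_num at h

theorem stmt_3 {n : ℕ} (B : Set (V n)) (hcard : B.ncard = 2 ∨ B.ncard = 4) :
    (∃ (d : V n → V n → ℝ) (r : ℝ), IsTSMetric d ∧ 0 < r ∧ B = ball d 0 r) ↔
      ((∃ i : Fin n, B = {0, e i}) ∨
       (∃ i j k : Fin n, i ≠ j ∧ i ≠ k ∧ j ≠ k ∧ B = {0, e i, e j, e k}) ∨
       (∃ i j : Fin n, i ≠ j ∧ B = {0, e i, e j, e i + e j})) := by
  constructor
  · rintro ⟨d, r, ⟨⟨hnn, hzero, hsymm, htri⟩, htinv, hsupp⟩, hr, rfl⟩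
    have h0 : (0 : V n) ∈ ball d 0 r := by
      simp only [ball, Set.mem_setOf_eq]
      rw [(hzero 0 0).mpr rfl]; exact le_of_lt hr
    have hdc : ∀ x y : V n, y ∈ ball d 0 r → supp x ⊆ supp y → x ∈ ball d 0 r := by
      intro x y hy hxy
      simp only [ball, Set.mem_setOf_eq] at hy ⊢
      calc d 0 x = d x 0 := hsymm 0 x
      _ ≤ d y 0 := hsupp x y hxy
      _ = d 0 y := hsymm y 0
      _ ≤ r := hy
    set Bb := ball d 0 r with hBb
    clear_value Bb
    have hfin : Bb.Finite := by
      rcases hcard with h | h <;>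
      · by_contra hinf
        rw [Set.Infinite.ncard hinf] at h
        omega
    rcases hcard with h2 | h4
    · -- |B| = 2
      left
      obtain ⟨a, b, hab, hBab⟩ := Set.ncard_eq_two.mp h2
      have hx : ∃ x : V n, x ≠ 0 ∧ Bb = {0, x} := by
        rcases (hBab ▸ h0 : (0:V n) ∈ ({a, b} : Set (V n))) with h | h
        · exact ⟨b, by rw [← h] at hab; exact hab.symm, by rw [hBab, ← h]⟩
        · exact ⟨a, by rw [← h] at hab; exact hab,
            by rw [hBab, ← h, Set.pair_comm]⟩
      obtain ⟨x, hx0, hBx⟩ := hx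
      have : ∃ i, x i ≠ 0 := by
        by_contra hc
        push_neg at hc
        exact hx0 (funext hc)
      obtain ⟨i, hi⟩ := this
      have hei : e i ∈ Bb := by
        apply hdc (e i) x (by rw [hBx]; right; rfl)
        intro k hk
        have : k = i := supp_e i hk
        subst this; exact hi
      rw [hBx] at hei
      rcases hei with h | h
      · exact absurd h (e_ne_zero i)
      · exact ⟨i, by rw [hBx, h]⟩
    · -- |B| = 4
      right
      by_cases hP : ∃ x ∈ Bb, ∃ i j : Fin n, i ≠ j ∧ x i ≠ 0 ∧ x j ≠ 0
      · right
        obtain ⟨x, hxB, i, j, hij, hxi, hxj⟩ := hP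
        have hsub : ∀ z : V n, supp z ⊆ {i, j} → z ∈ Bb := by
          intro z hz
          apply hdc z x hxB
          intro k hk
          rcases hz hk with h | h <;> subst h <;> assumption
        have hei : e i ∈ Bb := hsub _ (fun k hk => Or.inl (supp_e i hk))
        have hej : e j ∈ Bb := hsub _ (fun k hk => Or.inr (supp_e j hk))
        have heij : e i + e j ∈ Bb := by
          apply hsub
          intro k hk
          by_cases hki : k = i
          · exact Or.inl hki
          right
          by_contra hkj
          apply hk
          rw [Pi.add_apply, e_apply_ne hki, e_apply_ne hkj, add_zero]
        refine ⟨i, j, hij, ?_⟩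
        have hsub4 : ({0, e i, e j, e i + e j} : Set (V n)) ⊆ Bb := by
          intro z hz
          rcases hz with h | h | h | h <;> subst h <;> assumption
        have hcard4 : ({0, e i, e j, e i + e j} : Set (V n)).ncard = 4 := by
          have m1 : e j ∉ ({e i + e j} : Set (V n)) := by
            simp only [Set.mem_singleton_iff]
            exact fun h => eij_ne_ej hij h.symm
          have m2 : e i ∉ ({e j, e i + e j} : Set (V n)) := by
            simp only [Set.mem_insert_iff, Set.mem_singleton_iff]
            push_neg
            exact ⟨fun h => hij (e_inj h), fun h => eij_ne_ei hij h.symm⟩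
          have m3 : (0 : V n) ∉ ({e i, e j, e i + e j} : Set (V n)) := by
            simp only [Set.mem_insert_iff, Set.mem_singleton_iff]
            push_neg
            exact ⟨fun h => e_ne_zero i h.symm, fun h => e_ne_zero j h.symm,
              fun h => eij_ne_zero hij h.symm⟩
          rw [Set.ncard_insert_of_notMem m3 (((Set.finite_singleton _).insert _).insert _),
            Set.ncard_insert_of_notMem m2 ((Set.finite_singleton _).insert _),
            Set.ncard_insert_of_notMem m1 (Set.finite_singleton _),
            Set.ncard_singleton]
        exact (Set.eq_of_subset_of_ncard_le hsub4 (by omega) hfin).symm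
      · left
        push_neg at hP
        have hsingle : ∀ x ∈ Bb, x ≠ 0 → ∃ i, x = e i := by
          intro x hxB hx0
          have : ∃ i, x i ≠ 0 := by
            by_contra hc
            push_neg at hc
            exact hx0 (funext hc)
          obtain ⟨i, hi⟩ := this
          refine ⟨i, ?_⟩
          have hs : supp x ⊆ {i} := by
            intro k hk
            by_contra hki
            exact hi (hP x hxB k i (fun h => hki h) hk)
          rcases supp_subset_singleton hs with h | h
          · exact absurd h hx0
          · exact h
        have hdiff : (Bb \ {0}).ncard = 3 := by
          rw [Set.ncard_diff_singleton_of_mem h0, h4]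
        obtain ⟨a, b, c, hab, hac, hbc, habc⟩ := Set.ncard_eq_three.mp hdiff
        have hBeq : Bb = {0, a, b, c} := by
          rw [← Set.insert_eq_self.mpr h0, ← Set.insert_diff_singleton, habc]
        have haB : a ∈ Bb := by rw [hBeq]; right; left; rfl
        have hbB : b ∈ Bb := by rw [hBeq]; right; right; left; rfl
        have hcB : c ∈ Bb := by rw [hBeq]; right; right; right; rfl
        have ha0 : a ≠ 0 := by
          have : a ∈ Bb \ {0} := by rw [habc]; left; rfl
          simpa using this.2
        have hb0 : b ≠ 0 := by
          have : b ∈ Bb \ {0} := by rw [habc]; right; left; rfl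
          simpa using this.2
        have hc0 : c ≠ 0 := by
          have : c ∈ Bb \ {0} := by rw [habc]; right; right; rfl
          simpa using this.2
        obtain ⟨i, rfl⟩ := hsingle a haB ha0
        obtain ⟨j, rfl⟩ := hsingle b hbB hb0
        obtain ⟨k, rfl⟩ := hsingle c hcB hc0
        exact ⟨i, j, k, fun h => hab (h ▸ rfl), fun h => hac (h ▸ rfl),
          fun h => hbc (h ▸ rfl), hBeq⟩
  · rintro (⟨i, rfl⟩ | ⟨i, j, k, hij, hik, hjk, rfl⟩ | ⟨i, j, hij, rfl⟩)
    · apply construct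
      · left; rfl
      · rintro x y (rfl | hy) hxy
        · left; exact eq_zero_of_supp_empty (by simpa [supp] using hxy)
        · rw [Set.mem_singleton_iff] at hy
          subst hy
          rcases supp_subset_singleton (fun t ht => supp_e i (hxy ht)) with h | h
          · left; exact h
          · right; exact h
    · apply construct
      · left; rfl
      · rintro x y (rfl | rfl | rfl | rfl) hxy
        · left; exact eq_zero_of_supp_empty (by simpa [supp] using hxy)
        all_goals
          rcases supp_subset_singleton (fun t ht => supp_e _ (hxy ht)) with h | h
        · left; exact h
        · right; left; exact h
        · left; exact h
        · right; right; left; exact h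
        · left; exact h
        · right; right; right; exact h
    · apply construct
      · left; rfl
      · rintro x y (rfl | rfl | rfl | rfl) hxy
        · left; exact eq_zero_of_supp_empty (by simpa [supp] using hxy)
        · rcases supp_subset_singleton (fun t ht => supp_e _ (hxy ht)) with h | h
          · left; exact h
          · right; left; exact h
        · rcases supp_subset_singleton (fun t ht => supp_e _ (hxy ht)) with h | h
          · left; exact h
          · right; right; left; exact h
        · have hsub : supp x ⊆ {i, j} := by
            intro t ht
            have := hxy ht
            simp only [supp, Set.mem_setOf_eq] at this
            by_contra hc
            simp only [Set.mem_insert_iff, Set.mem_singleton_iff] at hc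
            push_neg at hc
            apply this
            rw [Pi.add_apply, e_apply_ne hc.1, e_apply_ne hc.2, add_zero]
          rcases supp_subset_pair hij hsub with h | h | h | h
          · left; exact h
          · right; left; exact h
          · right; right; left; exact h
          · right; right; right; exact h
end

section
/- Let $n\ge 2$ and let $x\in\mathbb{F}_2^n$ with Hamming weight $\omega_H(x)\ge 2$, and set $D_n(x)=\{0,x\}\cup\{e_1,\dots,e_n\}$. Then there exist a TS-metric $d$ on $\mathbb{F}_2^n$ and $r>0$ with $D_n(x)=B_d(0,r)$ if and only if $\omega_H(x)=2$. -/
/-- The tile `Dₙ(x) = {0, x} ∪ {e₁, …, eₙ}`. -/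
def Dtile {n : ℕ} (x : V n) : Set (V n) := {0, x} ∪ Set.range (e (n := n))

/- ### Auxiliary lemmas -/

lemma zmod2_eq_one {c : ZMod 2} (h : c ≠ 0) : c = 1 := by
  revert h
  revert c
  decide

lemma V_add_self {n : ℕ} (a : V n) : a + a = 0 := by
  funext i
  show a i + a i = 0
  exact (by decide : ∀ c : ZMod 2, c + c = 0) (a i)

lemma V_add_eq_zero {n : ℕ} {a b : V n} : a + b = 0 ↔ a = b := by
  constructor
  · intro h
    have : a + (b + b) = a := by rw [V_add_self, add_zero]
    calc a = a + (b + b) := this.symm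
      _ = (a + b) + b := by ring
      _ = b := by rw [h, zero_add]
  · rintro rfl; exact V_add_self a

/-- the support as a finset -/
def sfin {n : ℕ} (y : V n) : Finset (Fin n) := Finset.univ.filter (fun i => y i ≠ 0)

lemma hammingNorm_eq_card {n : ℕ} (y : V n) : hammingNorm y = (sfin y).card := rfl

lemma sfin_subset {n : ℕ} {a b : V n} (h : supp a ⊆ supp b) : sfin a ⊆ sfin b := by
  intro i hi
  simp only [sfin, Finset.mem_filter, Finset.mem_univ, true_and] at hi ⊢
  exact h hi

lemma norm_le_of_supp_subset {n : ℕ} {a b : V n} (h : supp a ⊆ supp b) :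
    hammingNorm a ≤ hammingNorm b :=
  Finset.card_le_card (sfin_subset h)

lemma eq_of_supp_subset {n : ℕ} {a b : V n} (h : supp a ⊆ supp b)
    (hc : hammingNorm b ≤ hammingNorm a) : a = b := by
  have hs : sfin a = sfin b := Finset.eq_of_subset_of_card_le (sfin_subset h) hc
  funext i
  by_cases ha : a i = 0
  · by_cases hb : b i = 0
    · rw [ha, hb]
    · have : i ∈ sfin b := by simp [sfin, hb]
      rw [← hs] at this
      simp [sfin, ha] at this
  · have : i ∈ sfin a := by simp [sfin, ha]
    rw [hs] at this
    simp only [sfin, Finset.mem_filter, Finset.mem_univ, true_and] at this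
    rw [zmod2_eq_one ha, zmod2_eq_one this]

lemma norm_e {n : ℕ} (i : Fin n) : hammingNorm (e i) = 1 := by
  rw [hammingNorm_eq_card]
  have : sfin (e i) = {i} := by
    ext j
    simp only [sfin, Finset.mem_filter, Finset.mem_univ, true_and, Finset.mem_singleton, e,
      Pi.single_apply]
    by_cases h : j = i <;> simp [h]
  rw [this, Finset.card_singleton]

lemma norm_one_iff {n : ℕ} {y : V n} : hammingNorm y = 1 ↔ ∃ i, y = e i := by
  constructor
  · intro h
    rw [hammingNorm_eq_card] at h
    obtain ⟨i, hi⟩ := Finset.card_eq_one.mp h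
    refine ⟨i, ?_⟩
    funext j
    by_cases hj : j = i
    · subst hj
      have : j ∈ sfin y := by rw [hi]; simp
      simp only [sfin, Finset.mem_filter, Finset.mem_univ, true_and] at this
      rw [zmod2_eq_one this]
      simp [e, Pi.single_apply]
    · have : j ∉ sfin y := by rw [hi]; simp [hj]
      simp only [sfin, Finset.mem_filter, Finset.mem_univ, true_and, not_not] at this
      rw [this]
      simp [e, Pi.single_apply, hj]
  · rintro ⟨i, rfl⟩; exact norm_e i

lemma mem_Dtile {n : ℕ} {x y : V n} :
    y ∈ Dtile x ↔ y = 0 ∨ y = x ∨ hammingNorm y = 1 := by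
  simp only [Dtile, Set.mem_union, Set.mem_insert_iff, Set.mem_singleton_iff, Set.mem_range,
    norm_one_iff]
  constructor
  · rintro ((h | h) | ⟨i, hi⟩)
    · exact Or.inl h
    · exact Or.inr (Or.inl h)
    · exact Or.inr (Or.inr ⟨i, hi.symm⟩)
  · rintro (h | h | ⟨i, hi⟩)
    · exact Or.inl (Or.inl h)
    · exact Or.inl (Or.inr h)
    · exact Or.inr ⟨i, hi.symm⟩

/- ### The weight for the constructed metric -/

open Classical in
noncomputable def wt {n : ℕ} (x y : V n) : ℝ :=
  if y = 0 then 0 else if y = x ∨ hammingNorm y = 1 then 1 else 2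

lemma wt_nonneg {n : ℕ} (x y : V n) : 0 ≤ wt x y := by
  unfold wt; split_ifs <;> norm_num

lemma wt_le_two {n : ℕ} (x y : V n) : wt x y ≤ 2 := by
  unfold wt; split_ifs <;> norm_num

lemma wt_zero {n : ℕ} (x : V n) : wt x 0 = 0 := by simp [wt]

lemma one_le_wt {n : ℕ} {x y : V n} (h : y ≠ 0) : 1 ≤ wt x y := by
  unfold wt; split_ifs <;> norm_num <;> tauto

lemma wt_eq_zero_iff {n : ℕ} {x y : V n} : wt x y = 0 ↔ y = 0 := by
  constructor
  · intro h
    by_contra hy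
    have := one_le_wt (x := x) hy
    rw [h] at this; norm_num at this
  · rintro rfl; exact wt_zero x

lemma wt_subadd {n : ℕ} (x s t : V n) : wt x (s + t) ≤ wt x s + wt x t := by
  by_cases hs : s = 0
  · subst hs; rw [zero_add, wt_zero, zero_add]
  by_cases ht : t = 0
  · subst ht; rw [add_zero, wt_zero, add_zero]
  calc wt x (s + t) ≤ 2 := wt_le_two x _
    _ = 1 + 1 := by norm_num
    _ ≤ wt x s + wt x t := add_le_add (one_le_wt hs) (one_le_wt ht)

lemma wt_mono {n : ℕ} {x a b : V n} (hx2 : hammingNorm x = 2) (h : supp a ⊆ supp b) :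
    wt x a ≤ wt x b := by
  by_cases ha : a = 0
  · subst ha; rw [wt_zero]; exact wt_nonneg x b
  have hb : b ≠ 0 := by
    intro hb0
    apply ha
    funext i
    by_contra hi
    have := h (show i ∈ supp a from hi)
    rw [hb0] at this
    exact this rfl
  by_cases hgood : a = x ∨ hammingNorm a = 1
  · have : wt x a = 1 := by simp [wt, ha, hgood]
    rw [this]; exact one_le_wt hb
  · have hwa : wt x a = 2 := by simp [wt, ha, hgood]
    push_neg at hgood
    obtain ⟨hax, han1⟩ := hgood
    have han : 2 ≤ hammingNorm a := by
      have h1 : hammingNorm a ≠ 0 := by rwa [hammingNorm_ne_zero_iff]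
      omega
    have hbgood : ¬(b = x ∨ hammingNorm b = 1) := by
      rintro (rfl | hb1)
      · exact hax (eq_of_supp_subset h (by omega))
      · have := norm_le_of_supp_subset h
        omega
    have : wt x b = 2 := by simp [wt, hb, hbgood]
    rw [hwa, this]

theorem stmt_5 {n : ℕ} (hn : 2 ≤ n) (x : V n) (hx : 2 ≤ hammingNorm x) :
    (∃ (d : V n → V n → ℝ) (r : ℝ), IsTSMetric d ∧ 0 < r ∧
        Dtile x = ball d 0 r) ↔ hammingNorm x = 2 := by
  constructor
  · rintro ⟨d, r, ⟨⟨hnn, heq, hsym, htri⟩, htrans, hresp⟩, hr, hball⟩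
    by_contra hne
    have h3 : 3 ≤ hammingNorm x := by omega
    have hx0 : x ≠ 0 := by
      rw [← hammingNorm_ne_zero_iff]; omega
    obtain ⟨i, hi⟩ : ∃ i, x i ≠ 0 := by
      by_contra hc
      push_neg at hc
      exact hx0 (funext hc)
    set y : V n := x + e i with hy
    have hyj : ∀ j, y j = if j = i then 0 else x j := by
      intro j
      show x j + e i j = _
      by_cases hji : j = i
      · rw [if_pos hji]
        subst hji
        simp only [e, Pi.single_eq_same]
        rw [zmod2_eq_one hi]
        decide
      · simp [e, Pi.single_apply, hji]
    have hsupp : supp y ⊆ supp x := by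
      intro j hj
      simp only [supp, Set.mem_setOf_eq] at hj ⊢
      rw [hyj j] at hj
      by_cases hji : j = i
      · rw [if_pos hji] at hj; exact absurd rfl hj
      · rwa [if_neg hji] at hj
    have hsfin : sfin y = (sfin x).erase i := by
      ext j
      simp only [sfin, Finset.mem_filter, Finset.mem_univ, true_and, Finset.mem_erase]
      rw [hyj j]
      by_cases hji : j = i
      · simp [hji]
      · simp [hji]
    have hny : hammingNorm y = hammingNorm x - 1 := by
      rw [hammingNorm_eq_card, hsfin, Finset.card_erase_of_mem (by simp [sfin, hi]),
        ← hammingNorm_eq_card]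
    have hny2 : 2 ≤ hammingNorm y := by omega
    have hynD : y ∉ Dtile x := by
      rw [mem_Dtile]
      push_neg
      refine ⟨?_, ?_, by omega⟩
      · rw [← hammingNorm_ne_zero_iff]; omega
      · intro hyx
        have := congrFun hyx i
        rw [hyj i, if_pos rfl] at this
        exact hi this.symm
    have hxD : x ∈ Dtile x := mem_Dtile.mpr (Or.inr (Or.inl rfl))
    rw [hball] at hxD
    have hdx : d 0 x ≤ r := hxD
    have hdy : d y 0 ≤ d x 0 := hresp y x hsupp
    have : d 0 y ≤ r := by
      rw [hsym] at hdx ⊢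
      exact le_trans hdy hdx
    have : y ∈ ball d 0 r := this
    rw [← hball] at this
    exact hynD this
  · intro hx2
    refine ⟨fun u v => wt x (u + v), 1, ⟨⟨?_, ?_, ?_, ?_⟩, ?_, ?_⟩, one_pos, ?_⟩
    · intro u v; exact wt_nonneg x _
    · intro u v; rw [wt_eq_zero_iff, V_add_eq_zero]
    · intro u v; show wt x (u + v) = wt x (v + u); rw [add_comm]
    · intro u v z
      have huz : u + z = (u + v) + (v + z) := by
        have : (u + v) + (v + z) = (u + z) + (v + v) := by ring
        rw [this, V_add_self, add_zero]
      show wt x (u + z) ≤ wt x (u + v) + wt x (v + z)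
      rw [huz]
      exact wt_subadd x _ _
    · intro a b z
      show wt x ((a + z) + (b + z)) = wt x (a + b)
      have : (a + z) + (b + z) = (a + b) + (z + z) := by ring
      rw [this, V_add_self, add_zero]
    · intro a b h
      show wt x (a + 0) ≤ wt x (b + 0)
      rw [add_zero, add_zero]
      exact wt_mono hx2 h
    · ext z
      simp only [ball, Set.mem_setOf_eq, zero_add, mem_Dtile]
      unfold wt
      split_ifs with h1 h2
      · simp [h1]
      · constructor
        · intro _; norm_num
        · rcases h2 with h2 | h2
          · exact fun _ => Or.inr (Or.inl h2)
          · exact fun _ => Or.inr (Or.inr h2)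
      · push_neg at h2
        constructor
        · rintro (h | h | h)
          · exact absurd h h1
          · exact absurd h h2.1
          · exact absurd h h2.2
        · intro h; norm_num at h
end

section
/- Let $s\le n$, let $d$ be a TS-metric on $\mathbb{F}_2^s$, $r>0$, and $D=B_d(0,r)\subseteq\mathbb{F}_2^s$. Then there exists a TS-metric $d^*$ on $\mathbb{F}_2^n$ such that $D^*=B_{d^*}(0,r)$, where $D^*=D\mid\{0_{n-s}\}=\{(x_1,\dots,x_s,0,\dots,0) : x\in D\}\subseteq\mathbb{F}_2^n$. -/
/-- Extension of a vector of `𝔽₂ˢ` to a vector of `𝔽₂ⁿ` (for `s ≤ n`) by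
padding with zeros. -/
def extendV (s n : ℕ) (x : V s) : V n :=
  fun i => if hi : (i : ℕ) < s then x ⟨(i : ℕ), hi⟩ else 0

theorem stmt_6 {s n : ℕ} (hsn : s ≤ n) (d : V s → V s → ℝ)
    (hd : IsTSMetric d) (r : ℝ) (hr : 0 < r) :
    ∃ d' : V n → V n → ℝ, IsTSMetric d' ∧
      (extendV s n) '' (ball d 0 r) = ball d' 0 r := by
  classical
  obtain ⟨⟨hnn, hzero, hsymm, htri⟩, hti, hrs⟩ := hd
  -- basic char-2 facts
  have hself : ∀ x : V n, x + x = 0 := by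
    intro x; funext i
    have : ∀ a : ZMod 2, a + a = 0 := by decide
    exact this _
  have heq_of_add : ∀ x y : V n, x + y = 0 → x = y := by
    intro x y h
    have := congrArg (· + y) h
    simpa [add_assoc, hself y] using this
  -- restriction
  set res : V n → V s := fun x j => x (Fin.castLE hsn j) with hresdef
  set tz : V n → Prop := fun x => ∀ i : Fin n, s ≤ (i : ℕ) → x i = 0 with htzdef
  set w : V n → ℝ := fun x => d (res x) 0 + (if tz x then 0 else r + 1) with hwdef
  have hres_add : ∀ a b : V n, res (a + b) = res a + res b := fun a b => rfl
  have hwsub2 : ∀ u v : V s, d (u + v) 0 ≤ d u 0 + d v 0 := by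
    intro u v
    have h1 : d (u + v) v = d u 0 := by simpa using hti u 0 v
    calc d (u + v) 0 ≤ d (u + v) v + d v 0 := htri _ _ _
      _ = d u 0 + d v 0 := by rw [h1]
  have hwnn : ∀ x : V n, 0 ≤ w x := by
    intro x
    have h1 : (0:ℝ) ≤ (if tz x then 0 else r + 1) := by
      split <;> linarith
    have := hnn (res x) 0
    simp only [hwdef]
    linarith
  have hwsub : ∀ a b : V n, w (a + b) ≤ w a + w b := by
    intro a b
    have h1 : d (res (a + b)) 0 ≤ d (res a) 0 + d (res b) 0 := by
      rw [hres_add]; exact hwsub2 _ _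
    have h2 : (if tz (a + b) then 0 else r + 1) ≤
        (if tz a then 0 else r + 1) + (if tz b then 0 else r + 1) := by
      by_cases h : tz (a + b)
      · simp only [if_pos h]
        have : (0:ℝ) ≤ (if tz a then 0 else r + 1) := by split <;> linarith
        have : (0:ℝ) ≤ (if tz b then 0 else r + 1) := by split <;> linarith
        have ha : (0:ℝ) ≤ (if tz a then 0 else r + 1) := by split <;> linarith
        linarith
      · simp only [if_neg h]
        have hab : ¬ tz a ∨ ¬ tz b := by
          by_contra hc
          push_neg at hc
          exact h (fun i hi => by
            show a i + b i = 0
            rw [hc.1 i hi, hc.2 i hi, add_zero])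
        rcases hab with ha | hb
        · rw [if_neg ha]
          have : (0:ℝ) ≤ (if tz b then 0 else r + 1) := by split <;> linarith
          linarith
        · rw [if_neg hb]
          have : (0:ℝ) ≤ (if tz a then 0 else r + 1) := by split <;> linarith
          linarith
    simp only [hwdef]
    linarith
  have hwzero : ∀ x : V n, w x = 0 ↔ x = 0 := by
    intro x
    constructor
    · intro h
      have h1 : 0 ≤ d (res x) 0 := hnn _ _
      have h2 : (0:ℝ) ≤ (if tz x then 0 else r + 1) := by split <;> linarith
      have hd0 : d (res x) 0 = 0 := by simp only [hwdef] at h; linarith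
      have hiz : (if tz x then (0:ℝ) else r + 1) = 0 := by
        simp only [hwdef] at h; linarith
      have htzx : tz x := by
        by_contra hc; rw [if_neg hc] at hiz; linarith
      have hres0 : res x = 0 := (hzero _ _).1 hd0
      funext i
      by_cases hi : (i : ℕ) < s
      · have := congrFun hres0 ⟨(i : ℕ), hi⟩
        simpa [hresdef, Fin.ext_iff] using this
      · exact htzx i (le_of_not_gt hi)
    · intro h
      subst h
      have htz0 : tz 0 := fun i _ => rfl
      have : res (0 : V n) = 0 := rfl
      simp only [hwdef, this, if_pos htz0, add_zero]
      exact (hzero _ _).2 rfl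
  refine ⟨fun x y => w (x + y), ⟨⟨?_, ?_, ?_, ?_⟩, ?_, ?_⟩, ?_⟩
  · intro x y; exact hwnn _
  · intro x y
    rw [hwzero]
    exact ⟨heq_of_add x y, fun h => h ▸ hself y⟩
  · intro x y; show w (x + y) = w (y + x); rw [add_comm]
  · intro x y z
    have : x + z = (x + y) + (y + z) := by
      rw [show (x + y) + (y + z) = x + (y + y) + z by ring, hself y, add_zero]
    show w (x + z) ≤ w (x + y) + w (y + z)
    rw [this]
    exact hwsub _ _
  · intro x y z
    have : (x + z) + (y + z) = x + y := by
      rw [show (x + z) + (y + z) = x + y + (z + z) by ring, hself z, add_zero]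
    show w ((x + z) + (y + z)) = w (x + y)
    rw [this]
  · intro x y hsupp
    simp only [add_zero]
    have hress : supp (res x) ⊆ supp (res y) := by
      intro j hj
      exact hsupp hj
    have h1 : d (res x) 0 ≤ d (res y) 0 := hrs _ _ hress
    have h2 : (if tz x then (0:ℝ) else r + 1) ≤ (if tz y then 0 else r + 1) := by
      by_cases hx : tz x
      · rw [if_pos hx]; split <;> linarith
      · rw [if_neg hx]
        have hy : ¬ tz y := by
          intro hy
          exact hx (fun i hi => by
            by_contra hne
            exact (hsupp hne) (hy i hi))
        rw [if_neg hy]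
    simp only [hwdef]
    linarith
  · ext y
    have hwy : w (0 + y) = w y := by rw [zero_add]
    constructor
    · rintro ⟨x, hx, rfl⟩
      have htze : tz (extendV s n x) := by
        intro i hi
        simp [extendV, not_lt.2 hi]
      have hrese : res (extendV s n x) = x := by
        funext j
        simp [hresdef, extendV, j.isLt]
      show w (0 + extendV s n x) ≤ r
      rw [zero_add]
      simp only [hwdef, hrese, if_pos htze, add_zero]
      have : d 0 x ≤ r := hx
      rwa [hsymm] at this
    · intro hy
      have hy' : w y ≤ r := by
        have : w (0 + y) ≤ r := hy
        rwa [zero_add] at this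
      have htzy : tz y := by
        by_contra hc
        have h1 : 0 ≤ d (res y) 0 := hnn _ _
        have : w y = d (res y) 0 + (r + 1) := by simp only [hwdef, if_neg hc]
        linarith
      have hyext : y = extendV s n (res y) := by
        funext i
        by_cases hi : (i : ℕ) < s
        · simp [extendV, hresdef, hi]
        · rw [htzy i (le_of_not_gt hi)]
          simp [extendV, hi]
      refine ⟨res y, ?_, hyext.symm⟩
      show d 0 (res y) ≤ r
      rw [hsymm]
      have : (if tz y then (0:ℝ) else r + 1) = 0 := if_pos htzy
      simp only [hwdef] at hy'
      rw [this] at hy'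
      linarith
end

section
/- Let $D_1\subseteq\mathbb{F}_2^n$ and $D_2\subseteq\mathbb{F}_2^m$ be nonempty sets and let $D=D_1\mid D_2\subseteq\mathbb{F}_2^{n+m}$ be their concatenation. Then $D$ is a polyhedromino if and only if both $D_1$ and $D_2$ are polyhedrominoes. -/
/-- Concatenation of a set of vectors of `𝔽₂ⁿ` with a set of vectors of `𝔽₂ᵐ`. -/
def concatSet {n m : ℕ} (A : Set (V n)) (B : Set (V m)) : Set (V (n + m)) :=
  {z | ∃ a ∈ A, ∃ b ∈ B, z = Fin.append a b}

/-- `γ` is a geodesic path of length `t` (for the Hamming distance). -/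
def IsGeodesic {n : ℕ} (γ : ℕ → V n) (t : ℕ) : Prop :=
  (∀ i < t, hammingDist (γ i) (γ (i + 1)) = 1) ∧ hammingDist (γ 0) (γ t) = t

/-- A polyhedromino: a nonempty set any two points of which are connected by a
geodesic path contained in the set. -/
def IsPolyhedromino {n : ℕ} (D : Set (V n)) : Prop :=
  D.Nonempty ∧ ∀ x ∈ D, ∀ y ∈ D, ∃ (t : ℕ) (γ : ℕ → V n),
    IsGeodesic γ t ∧ γ 0 = x ∧ γ t = y ∧ ∀ i ≤ t, γ i ∈ D

lemma hammingDist_append_aux {n m : ℕ} (a a' : V n) (b b' : V m) :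
    hammingDist (Fin.append a b) (Fin.append a' b') = hammingDist a a' + hammingDist b b' := by
  simp only [hammingDist, Finset.card_filter]
  rw [Fin.sum_univ_add]
  simp [Fin.append_left, Fin.append_right]

lemma path_dist_le_aux {n : ℕ} (γ : ℕ → V n) (t : ℕ)
    (h : ∀ i < t, hammingDist (γ i) (γ (i + 1)) = 1) :
    ∀ i k, i + k ≤ t → hammingDist (γ i) (γ (i + k)) ≤ k := by
  intro i k
  induction k with
  | zero => simp
  | succ k ih =>
    intro hk
    have h1 : hammingDist (γ i) (γ (i + (k + 1))) ≤
        hammingDist (γ i) (γ (i + k)) + hammingDist (γ (i + k)) (γ (i + k + 1)) := by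
      rw [show i + (k + 1) = i + k + 1 from rfl]
      exact hammingDist_triangle _ _ _
    have h2 := h (i + k) (by omega)
    have h3 := ih (by omega)
    omega

lemma step_of_poly_aux {n : ℕ} {D : Set (V n)} (hD : IsPolyhedromino D) :
    ∀ x ∈ D, ∀ y ∈ D, x ≠ y → ∃ z ∈ D,
      hammingDist x z = 1 ∧ hammingDist z y + 1 = hammingDist x y := by
  intro x hx y hy hxy
  obtain ⟨t, γ, ⟨hstep, hdist⟩, h0, ht, hmem⟩ := hD.2 x hx y hy
  have ht0 : 0 < t := by
    rcases Nat.eq_zero_or_pos t with h | h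
    · exfalso; apply hxy; rw [← h0, ← ht, h]
    · exact h
  refine ⟨γ 1, hmem 1 ht0, ?_, ?_⟩
  · have := hstep 0 ht0; rwa [h0] at this
  · have h1t : hammingDist (γ 1) y ≤ t - 1 := by
      have := path_dist_le_aux γ t hstep 1 (t - 1) (by omega)
      rw [show 1 + (t - 1) = t from by omega] at this
      rwa [ht] at this
    have htri : hammingDist x y ≤
        hammingDist x (γ 1) + hammingDist (γ 1) y := by
      rw [← h0, ← ht]; exact hammingDist_triangle _ _ _
    have h01 : hammingDist x (γ 1) = 1 := by
      have := hstep 0 ht0; rwa [h0] at this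
    have hxy' : hammingDist x y = t := by rw [← h0, ← ht]; exact hdist
    omega

lemma poly_of_step_aux {n : ℕ} {D : Set (V n)} (hne : D.Nonempty)
    (hstep : ∀ x ∈ D, ∀ y ∈ D, x ≠ y → ∃ z ∈ D,
      hammingDist x z = 1 ∧ hammingDist z y + 1 = hammingDist x y) :
    IsPolyhedromino D := by
  refine ⟨hne, ?_⟩
  intro x hx y hy
  generalize hT : hammingDist x y = T
  induction T generalizing x with
  | zero =>
    have hxy : x = y := hammingDist_eq_zero.mp hT
    refine ⟨0, fun _ => x, ⟨fun i hi => by omega, by simp⟩, rfl, hxy, fun i hi => ?_⟩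
    interval_cases i
    exact hx
  | succ T ih =>
    have hxy : x ≠ y := by
      intro h; rw [h, hammingDist_self] at hT; omega
    obtain ⟨z, hz, hz1, hz2⟩ := hstep x hx y hy hxy
    obtain ⟨t', γ', ⟨hs', hd'⟩, hz0, hzt, hmem'⟩ := ih z hz (by omega)
    have ht' : t' = T := by
      have : hammingDist z y = t' := by rw [← hz0, ← hzt]; exact hd'
      omega
    set δ : ℕ → V n := fun i => if i = 0 then x else γ' (i - 1) with hδ
    have hδ0 : δ 0 = x := by simp [hδ]
    have hδs : ∀ i, δ (i + 1) = γ' i := by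
      intro i
      simp [hδ]
    refine ⟨t' + 1, δ, ⟨?_, ?_⟩, hδ0, ?_, ?_⟩
    · intro i hi
      rcases Nat.eq_zero_or_pos i with h | h
      · subst h
        rw [hδ0, hδs 0, hz0]
        exact hz1
      · obtain ⟨j, rfl⟩ := Nat.exists_eq_add_of_le h
        rw [show Nat.succ 0 + j = j + 1 from by omega, hδs, hδs]
        exact hs' j (by omega)
    · rw [hδ0, hδs, hzt]
      omega
    · rw [hδs, hzt]
    · intro i hi
      rcases Nat.eq_zero_or_pos i with h | h
      · subst h; rw [hδ0]; exact hx
      · obtain ⟨j, rfl⟩ := Nat.exists_eq_add_of_le h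
        rw [show Nat.succ 0 + j = j + 1 from by omega, hδs]
        exact hmem' j (by omega)

theorem stmt_7 {n m : ℕ} (D₁ : Set (V n)) (D₂ : Set (V m))
    (h₁ : D₁.Nonempty) (h₂ : D₂.Nonempty) :
    IsPolyhedromino (concatSet D₁ D₂) ↔
      IsPolyhedromino D₁ ∧ IsPolyhedromino D₂ := by
  constructor
  · intro hD
    constructor
    · -- D₁ is a polyhedromino
      obtain ⟨b, hb⟩ := h₂
      refine poly_of_step_aux h₁ ?_
      intro x hx y hy hxy
      have hxm : Fin.append x b ∈ concatSet D₁ D₂ := ⟨x, hx, b, hb, rfl⟩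
      have hym : Fin.append y b ∈ concatSet D₁ D₂ := ⟨y, hy, b, hb, rfl⟩
      have hne : Fin.append x b ≠ Fin.append y b := by
        intro h
        apply hxy
        funext j
        have := congrFun h (Fin.castAdd m j)
        simpa [Fin.append_left] using this
      obtain ⟨z, hz, hz1, hz2⟩ := step_of_poly_aux hD _ hxm _ hym hne
      obtain ⟨a₁, ha₁, b₁, hb₁, rfl⟩ := hz
      rw [hammingDist_append_aux] at hz1 hz2
      rw [hammingDist_append_aux, hammingDist_self] at hz2
      have hc : hammingDist b₁ b = hammingDist b b₁ := hammingDist_comm _ _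
      rcases Nat.eq_zero_or_pos (hammingDist x a₁) with h | h
      · exfalso
        have hxa : x = a₁ := hammingDist_eq_zero.mp h
        subst hxa
        omega
      · refine ⟨a₁, ha₁, by omega, by omega⟩
    · -- D₂ is a polyhedromino
      obtain ⟨a, ha⟩ := h₁
      refine poly_of_step_aux h₂ ?_
      intro x hx y hy hxy
      have hxm : Fin.append a x ∈ concatSet D₁ D₂ := ⟨a, ha, x, hx, rfl⟩
      have hym : Fin.append a y ∈ concatSet D₁ D₂ := ⟨a, ha, y, hy, rfl⟩
      have hne : Fin.append a x ≠ Fin.append a y := by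
        intro h
        apply hxy
        funext j
        have := congrFun h (Fin.natAdd n j)
        simpa [Fin.append_right] using this
      obtain ⟨z, hz, hz1, hz2⟩ := step_of_poly_aux hD _ hxm _ hym hne
      obtain ⟨a₁, ha₁, b₁, hb₁, rfl⟩ := hz
      rw [hammingDist_append_aux] at hz1 hz2
      rw [hammingDist_append_aux, hammingDist_self] at hz2
      have hc : hammingDist a₁ a = hammingDist a a₁ := hammingDist_comm _ _
      rcases Nat.eq_zero_or_pos (hammingDist x b₁) with h | h
      · exfalso
        have hxb : x = b₁ := hammingDist_eq_zero.mp h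
        subst hxb
        omega
      · refine ⟨b₁, hb₁, by omega, by omega⟩
  · rintro ⟨hD₁, hD₂⟩
    refine poly_of_step_aux ?_ ?_
    · obtain ⟨a, ha⟩ := h₁
      obtain ⟨b, hb⟩ := h₂
      exact ⟨Fin.append a b, a, ha, b, hb, rfl⟩
    · rintro x ⟨a, ha, b, hb, rfl⟩ y ⟨a', ha', b', hb', rfl⟩ hxy
      rcases eq_or_ne a a' with h | h
      · subst h
        have hbb : b ≠ b' := by
          intro h; exact hxy (by rw [h])
        obtain ⟨z, hz, hz1, hz2⟩ := step_of_poly_aux hD₂ b hb b' hb' hbb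
        refine ⟨Fin.append a z, ⟨a, ha, z, hz, rfl⟩, ?_, ?_⟩
        · simp only [hammingDist_append_aux, hammingDist_self]; omega
        · simp only [hammingDist_append_aux, hammingDist_self]; omega
      · obtain ⟨z, hz, hz1, hz2⟩ := step_of_poly_aux hD₁ a ha a' ha' h
        refine ⟨Fin.append z b, ⟨z, hz, b, hb, rfl⟩, ?_, ?_⟩
        · simp only [hammingDist_append_aux, hammingDist_self]; omega
        · simp only [hammingDist_append_aux, hammingDist_self]; omega
end

section
/- Let $D_1,C_1\subseteq\mathbb{F}_2^n$ and $D_2,C_2\subseteq\mathbb{F}_2^m$. Then $(D_1\mid D_2,\ C_1\mid C_2)$ is a poly-tiling of $\mathbb{F}_2^{n+m}$ if and only if $(D_1,C_1)$ is a poly-tiling of $\mathbb{F}_2^n$ and $(D_2,C_2)$ is a poly-tiling of $\mathbb{F}_2^m$. -/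
/-- `(D, C)` is a tiling of `𝔽₂ⁿ`. -/
def IsTiling {n : ℕ} (D C : Set (V n)) : Prop :=
  (⋃ c ∈ C, (fun x => c + x) '' D) = Set.univ ∧
  C.PairwiseDisjoint (fun c => (fun x => c + x) '' D)

/-- A poly-tiling: a tiling whose tile is a polyhedromino. -/
def IsPolyTiling {n : ℕ} (D C : Set (V n)) : Prop :=
  IsTiling D C ∧ IsPolyhedromino D

namespace Aux9

variable {n m : ℕ}

def p1 (z : V (n + m)) : V n := fun i => z (Fin.castAdd m i)
def p2 (z : V (n + m)) : V m := fun i => z (Fin.natAdd n i)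

@[simp] lemma p1_append (a : V n) (b : V m) : p1 (Fin.append a b) = a := by
  funext i; simp [p1]

@[simp] lemma p2_append (a : V n) (b : V m) : p2 (Fin.append a b) = b := by
  funext i; simp [p2]

lemma append_p (z : V (n + m)) : Fin.append (p1 z) (p2 z) = z := by
  funext i
  induction i using Fin.addCases with
  | left i => simp [p1]
  | right i => simp [p2]

lemma p1_add (x y : V (n + m)) : p1 (x + y) = p1 x + p1 y := rfl
lemma p2_add (x y : V (n + m)) : p2 (x + y) = p2 x + p2 y := rfl

lemma hammingDist_append (a c : V n) (b d : V m) :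
    hammingDist (Fin.append a b) (Fin.append c d) = hammingDist a c + hammingDist b d := by
  classical
  simp only [hammingDist, Finset.card_filter]
  rw [Fin.sum_univ_add]
  simp

lemma hd_split (x y : V (n + m)) :
    hammingDist x y = hammingDist (p1 x) (p1 y) + hammingDist (p2 x) (p2 y) := by
  conv_lhs => rw [← append_p x, ← append_p y]
  exact hammingDist_append _ _ _ _

lemma mem_concat {A : Set (V n)} {B : Set (V m)} {z : V (n + m)} :
    z ∈ concatSet A B ↔ p1 z ∈ A ∧ p2 z ∈ B := by
  constructor
  · rintro ⟨a, ha, b, hb, rfl⟩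
    rw [p1_append, p2_append]; exact ⟨ha, hb⟩
  · rintro ⟨h1, h2⟩
    exact ⟨_, h1, _, h2, (append_p z).symm⟩

lemma hd_chain {k : ℕ} (δ : ℕ → V k) :
    ∀ t, hammingDist (δ 0) (δ t) ≤ ∑ i ∈ Finset.range t, hammingDist (δ i) (δ (i + 1))
  | 0 => by simp
  | (t + 1) => by
    rw [Finset.sum_range_succ]
    calc hammingDist (δ 0) (δ (t + 1)) ≤ hammingDist (δ 0) (δ t) + hammingDist (δ t) (δ (t + 1)) :=
      hammingDist_triangle _ _ _
    _ ≤ _ := by gcongr; exact hd_chain δ t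

lemma steps_one {k : ℕ} (δ : ℕ → V k) (t : ℕ)
    (hle : ∀ i < t, hammingDist (δ i) (δ (i + 1)) ≤ 1)
    (hend : t ≤ hammingDist (δ 0) (δ t)) :
    IsGeodesic δ t := by
  have hsum := hd_chain δ t
  have h1 : ∑ i ∈ Finset.range t, hammingDist (δ i) (δ (i + 1)) ≤ t := by
    calc ∑ i ∈ Finset.range t, hammingDist (δ i) (δ (i + 1))
        ≤ ∑ _i ∈ Finset.range t, 1 :=
          Finset.sum_le_sum fun i hi => hle i (Finset.mem_range.mp hi)
      _ = t := by simp
  constructor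
  · intro i hi
    by_contra hne
    have hlt : hammingDist (δ i) (δ (i + 1)) < 1 :=
      lt_of_le_of_ne (hle i hi) hne
    have : ∑ j ∈ Finset.range t, hammingDist (δ j) (δ (j + 1)) <
        ∑ _j ∈ Finset.range t, 1 :=
      Finset.sum_lt_sum (fun j hj => hle j (Finset.mem_range.mp hj))
        ⟨i, Finset.mem_range.mpr hi, hlt⟩
    simp only [Finset.sum_const, smul_eq_mul, mul_one, Finset.card_range] at this
    omega
  · exact le_antisymm (le_trans hsum h1) hend

lemma isTiling_iff {k : ℕ} {D C : Set (V k)} :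
    IsTiling D C ↔ (∀ z, ∃ c ∈ C, ∃ d ∈ D, z = c + d) ∧
      (∀ c ∈ C, ∀ c' ∈ C, ∀ d ∈ D, ∀ d' ∈ D, c + d = c' + d' → c = c') := by
  constructor
  · rintro ⟨hcov, hdisj⟩
    constructor
    · intro z
      have hz : z ∈ (⋃ c ∈ C, (fun x => c + x) '' D) := hcov ▸ Set.mem_univ z
      simp only [Set.mem_iUnion, Set.mem_image] at hz
      obtain ⟨c, hc, d, hd, hz⟩ := hz
      exact ⟨c, hc, d, hd, hz.symm⟩
    · intro c hc c' hc' d hd d' hd' heq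
      by_contra hne
      have := hdisj hc hc' hne
      rw [Function.onFun, Set.disjoint_left] at this
      exact this ⟨d, hd, rfl⟩ ⟨d', hd', heq.symm⟩
  · rintro ⟨hcov, huniq⟩
    constructor
    · ext z
      simp only [Set.mem_iUnion, Set.mem_image, Set.mem_univ, iff_true]
      obtain ⟨c, hc, d, hd, hz⟩ := hcov z
      exact ⟨c, hc, d, hd, hz.symm⟩
    · intro c hc c' hc' hne
      rw [Function.onFun, Set.disjoint_left]
      rintro z ⟨d, hd, rfl⟩ ⟨d', hd', heq⟩
      exact hne (huniq c hc c' hc' d hd d' hd' heq.symm)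

lemma append_add (a c : V n) (b d : V m) :
    Fin.append (a + c) (b + d) = Fin.append a b + Fin.append c d := by
  funext i
  induction i using Fin.addCases with
  | left i => simp [Fin.append_left]
  | right i => simp [Fin.append_right]

end Aux9

open Aux9
theorem stmt_9 {n m : ℕ} (D₁ C₁ : Set (V n)) (D₂ C₂ : Set (V m)) :
    IsPolyTiling (concatSet D₁ D₂) (concatSet C₁ C₂) ↔
      IsPolyTiling D₁ C₁ ∧ IsPolyTiling D₂ C₂ := by
  constructor
  · rintro ⟨hT, hNe, hGeo⟩
    rw [isTiling_iff] at hT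
    obtain ⟨hcov, huniq⟩ := hT
    -- nonemptiness of the factors
    obtain ⟨z₀, hz₀⟩ := hNe
    rw [mem_concat] at hz₀
    obtain ⟨c₀, hc₀, d₀, hd₀, -⟩ := hcov 0
    rw [mem_concat] at hc₀
    -- coverage in each factor
    have hcov₁ : ∀ x : V n, ∃ c ∈ C₁, ∃ d ∈ D₁, x = c + d := by
      intro x
      obtain ⟨c, hc, d, hd, hx⟩ := hcov (Fin.append x 0)
      rw [mem_concat] at hc hd
      refine ⟨p1 c, hc.1, p1 d, hd.1, ?_⟩
      have := congrArg p1 hx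
      rwa [p1_append, p1_add] at this
    have hcov₂ : ∀ x : V m, ∃ c ∈ C₂, ∃ d ∈ D₂, x = c + d := by
      intro x
      obtain ⟨c, hc, d, hd, hx⟩ := hcov (Fin.append 0 x)
      rw [mem_concat] at hc hd
      refine ⟨p2 c, hc.2, p2 d, hd.2, ?_⟩
      have := congrArg p2 hx
      rwa [p2_append, p2_add] at this
    -- uniqueness in each factor
    have huniq₁ : ∀ c ∈ C₁, ∀ c' ∈ C₁, ∀ d ∈ D₁, ∀ d' ∈ D₁, c + d = c' + d' → c = c' := by
      intro c hc c' hc' d hd d' hd' heq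
      have h1 : Fin.append c (p2 c₀) ∈ concatSet C₁ C₂ := mem_concat.mpr (by simp [hc, hc₀.2])
      have h2 : Fin.append c' (p2 c₀) ∈ concatSet C₁ C₂ := mem_concat.mpr (by simp [hc', hc₀.2])
      have h3 : Fin.append d (p2 z₀) ∈ concatSet D₁ D₂ := mem_concat.mpr (by simp [hd, hz₀.2])
      have h4 : Fin.append d' (p2 z₀) ∈ concatSet D₁ D₂ := mem_concat.mpr (by simp [hd', hz₀.2])
      have := huniq _ h1 _ h2 _ h3 _ h4 (by rw [← append_add, ← append_add, heq])
      have := congrArg p1 this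
      rwa [p1_append, p1_append] at this
    have huniq₂ : ∀ c ∈ C₂, ∀ c' ∈ C₂, ∀ d ∈ D₂, ∀ d' ∈ D₂, c + d = c' + d' → c = c' := by
      intro c hc c' hc' d hd d' hd' heq
      have h1 : Fin.append (p1 c₀) c ∈ concatSet C₁ C₂ := mem_concat.mpr (by simp [hc, hc₀.1])
      have h2 : Fin.append (p1 c₀) c' ∈ concatSet C₁ C₂ := mem_concat.mpr (by simp [hc', hc₀.1])
      have h3 : Fin.append (p1 z₀) d ∈ concatSet D₁ D₂ := mem_concat.mpr (by simp [hd, hz₀.1])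
      have h4 : Fin.append (p1 z₀) d' ∈ concatSet D₁ D₂ := mem_concat.mpr (by simp [hd', hz₀.1])
      have := huniq _ h1 _ h2 _ h3 _ h4 (by rw [← append_add, ← append_add, heq])
      have := congrArg p2 this
      rwa [p2_append, p2_append] at this
    -- polyhedromino structure in each factor
    have hPoly₁ : IsPolyhedromino D₁ := by
      refine ⟨⟨p1 z₀, hz₀.1⟩, ?_⟩
      intro x hx y hy
      obtain ⟨t, γ, ⟨hstep, hdist⟩, h0, ht, hmem⟩ :=
        hGeo (Fin.append x (p2 z₀)) (mem_concat.mpr (by simp [hx, hz₀.2]))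
             (Fin.append y (p2 z₀)) (mem_concat.mpr (by simp [hy, hz₀.2]))
      refine ⟨t, fun i => p1 (γ i), ?_, by simp [h0], by simp [ht], ?_⟩
      · refine steps_one _ t (fun i hi => ?_) ?_
        · have := hstep i hi
          rw [hd_split] at this
          omega
        · show t ≤ hammingDist (p1 (γ 0)) (p1 (γ t))
          have h := hdist
          rw [hd_split] at h
          have h2 : hammingDist (p2 (γ 0)) (p2 (γ t)) = 0 := by
            rw [h0, ht, p2_append, p2_append, hammingDist_self]
          omega
      · intro i hi
        exact (mem_concat.mp (hmem i hi)).1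
    have hPoly₂ : IsPolyhedromino D₂ := by
      refine ⟨⟨p2 z₀, hz₀.2⟩, ?_⟩
      intro x hx y hy
      obtain ⟨t, γ, ⟨hstep, hdist⟩, h0, ht, hmem⟩ :=
        hGeo (Fin.append (p1 z₀) x) (mem_concat.mpr (by simp [hx, hz₀.1]))
             (Fin.append (p1 z₀) y) (mem_concat.mpr (by simp [hy, hz₀.1]))
      refine ⟨t, fun i => p2 (γ i), ?_, by simp [h0], by simp [ht], ?_⟩
      · refine steps_one _ t (fun i hi => ?_) ?_
        · have := hstep i hi
          rw [hd_split] at this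
          omega
        · show t ≤ hammingDist (p2 (γ 0)) (p2 (γ t))
          have h := hdist
          rw [hd_split] at h
          have h2 : hammingDist (p1 (γ 0)) (p1 (γ t)) = 0 := by
            rw [h0, ht, p1_append, p1_append, hammingDist_self]
          omega
      · intro i hi
        exact (mem_concat.mp (hmem i hi)).2
    exact ⟨⟨isTiling_iff.mpr ⟨hcov₁, huniq₁⟩, hPoly₁⟩, ⟨isTiling_iff.mpr ⟨hcov₂, huniq₂⟩, hPoly₂⟩⟩
  · rintro ⟨⟨hT₁, hNe₁, hGeo₁⟩, ⟨hT₂, hNe₂, hGeo₂⟩⟩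
    rw [isTiling_iff] at hT₁ hT₂
    obtain ⟨hcov₁, huniq₁⟩ := hT₁
    obtain ⟨hcov₂, huniq₂⟩ := hT₂
    refine ⟨isTiling_iff.mpr ⟨?_, ?_⟩, ?_, ?_⟩
    · intro z
      obtain ⟨c₁, hc₁, d₁, hd₁, h1⟩ := hcov₁ (p1 z)
      obtain ⟨c₂, hc₂, d₂, hd₂, h2⟩ := hcov₂ (p2 z)
      refine ⟨Fin.append c₁ c₂, mem_concat.mpr (by simp [hc₁, hc₂]),
              Fin.append d₁ d₂, mem_concat.mpr (by simp [hd₁, hd₂]), ?_⟩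
      rw [← append_add, ← h1, ← h2, append_p]
    · intro c hc c' hc' d hd d' hd' heq
      rw [mem_concat] at hc hc' hd hd'
      have e1 := congrArg p1 heq
      have e2 := congrArg p2 heq
      rw [p1_add, p1_add] at e1
      rw [p2_add, p2_add] at e2
      have g1 := huniq₁ _ hc.1 _ hc'.1 _ hd.1 _ hd'.1 e1
      have g2 := huniq₂ _ hc.2 _ hc'.2 _ hd.2 _ hd'.2 e2
      rw [← append_p c, ← append_p c', g1, g2]
    · obtain ⟨d₁, hd₁⟩ := hNe₁
      obtain ⟨d₂, hd₂⟩ := hNe₂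
      exact ⟨Fin.append d₁ d₂, mem_concat.mpr (by simp [hd₁, hd₂])⟩
    · intro x hx y hy
      rw [mem_concat] at hx hy
      obtain ⟨t₁, γ₁, ⟨hstep₁, hdist₁⟩, h0₁, ht₁, hmem₁⟩ := hGeo₁ (p1 x) hx.1 (p1 y) hy.1
      obtain ⟨t₂, γ₂, ⟨hstep₂, hdist₂⟩, h0₂, ht₂, hmem₂⟩ := hGeo₂ (p2 x) hx.2 (p2 y) hy.2
      refine ⟨t₁ + t₂, fun i => Fin.append (γ₁ (min i t₁)) (γ₂ (i - t₁)), ⟨?_, ?_⟩, ?_, ?_, ?_⟩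
      · intro i hi
        rw [hammingDist_append]
        rcases lt_or_ge i t₁ with h | h
        · have e1 : min i t₁ = i := by omega
          have e2 : min (i + 1) t₁ = i + 1 := by omega
          have e3 : i - t₁ = 0 := by omega
          have e4 : i + 1 - t₁ = 0 := by omega
          rw [e1, e2, e3, e4, hstep₁ i h, hammingDist_self]
        · have e1 : min i t₁ = t₁ := by omega
          have e2 : min (i + 1) t₁ = t₁ := by omega
          have e3 : i + 1 - t₁ = (i - t₁) + 1 := by omega
          rw [e1, e2, e3, hstep₂ (i - t₁) (by omega), hammingDist_self]
      · show hammingDist (Fin.append (γ₁ (min 0 t₁)) (γ₂ (0 - t₁)))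
            (Fin.append (γ₁ (min (t₁ + t₂) t₁)) (γ₂ (t₁ + t₂ - t₁))) = t₁ + t₂
        have e1 : min 0 t₁ = 0 := by omega
        have e2 : (0 : ℕ) - t₁ = 0 := by omega
        have e3 : min (t₁ + t₂) t₁ = t₁ := by omega
        have e4 : t₁ + t₂ - t₁ = t₂ := by omega
        rw [e1, e2, e3, e4, hammingDist_append, hdist₁, hdist₂]
      · show Fin.append (γ₁ (min 0 t₁)) (γ₂ (0 - t₁)) = x
        have e1 : min 0 t₁ = 0 := by omega
        have e2 : (0 : ℕ) - t₁ = 0 := by omega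
        rw [e1, e2, h0₁, h0₂, append_p]
      · show Fin.append (γ₁ (min (t₁ + t₂) t₁)) (γ₂ (t₁ + t₂ - t₁)) = y
        have e3 : min (t₁ + t₂) t₁ = t₁ := by omega
        have e4 : t₁ + t₂ - t₁ = t₂ := by omega
        rw [e3, e4, ht₁, ht₂, append_p]
      · intro i hi
        have h1 := hmem₁ (min i t₁) (min_le_right i t₁)
        have h2 := hmem₂ (i - t₁) (by omega : i - t₁ ≤ t₂)
        exact mem_concat.mpr (by simp [h1, h2])
end

section
/- If $C_1\subseteq\mathbb{F}_2^n$ and $C_2\subseteq\mathbb{F}_2^m$ are TS-perfect codes, then the concatenation $C_1\mid C_2\subseteq\mathbb{F}_2^{n+m}$ is a TS-perfect code; that is, there exist a TS-metric $d$ on $\mathbb{F}_2^{n+m}$ and a radius $\rho>0$ such that the balls $B_d(c,\rho)$, $c\in C_1\mid C_2$, are pairwise disjoint and cover $\mathbb{F}_2^{n+m}$. -/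
/-- `C` is a `(d, r)`-perfect code. -/
def IsPerfect {n : ℕ} (d : V n → V n → ℝ) (C : Set (V n)) (r : ℝ) : Prop :=
  (⋃ c ∈ C, ball d c r) = Set.univ ∧ C.PairwiseDisjoint (fun c => ball d c r)

/-- `C` is a TS-perfect code: a `(d, r)`-perfect code for some TS-metric `d`
and some radius `r > 0`. -/
def IsTSPerfect {n : ℕ} (C : Set (V n)) : Prop :=
  ∃ (d : V n → V n → ℝ) (r : ℝ), IsTSMetric d ∧ 0 < r ∧ IsPerfect d C r

namespace TSaux

def pl {n m : ℕ} (x : V (n+m)) : V n := fun i => x (Fin.castAdd m i)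
def pr {n m : ℕ} (x : V (n+m)) : V m := fun j => x (Fin.natAdd n j)

lemma pl_append {n m : ℕ} (a : V n) (b : V m) : pl (Fin.append a b) = a := by
  funext i; simp [pl, Fin.append_left]

lemma pr_append {n m : ℕ} (a : V n) (b : V m) : pr (Fin.append a b) = b := by
  funext j; simp [pr, Fin.append_right]

lemma append_pl_pr {n m : ℕ} (x : V (n+m)) : Fin.append (pl x) (pr x) = x := by
  funext i
  refine Fin.addCases (motive := fun i => Fin.append (pl x) (pr x) i = x i)
    (fun i => ?_) (fun j => ?_) i
  · simp [pl, Fin.append_left]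
  · simp [pr, Fin.append_right]

lemma eq_of_proj {n m : ℕ} {x y : V (n+m)} (h1 : pl x = pl y) (h2 : pr x = pr y) :
    x = y := by
  rw [← append_pl_pr x, ← append_pl_pr y, h1, h2]

end TSaux

open TSaux in
theorem stmt_12 {n m : ℕ} (C₁ : Set (V n)) (C₂ : Set (V m))
    (h₁ : IsTSPerfect C₁) (h₂ : IsTSPerfect C₂) :
    IsTSPerfect (concatSet C₁ C₂) := by
  obtain ⟨d₁, r₁, ⟨⟨m1pos, m1zero, m1symm, m1tri⟩, t1, s1⟩, hr₁, cov₁, dis₁⟩ := h₁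
  obtain ⟨d₂, r₂, ⟨⟨m2pos, m2zero, m2symm, m2tri⟩, t2, s2⟩, hr₂, cov₂, dis₂⟩ := h₂
  refine ⟨fun x y => max (d₁ (pl x) (pl y) / r₁) (d₂ (pr x) (pr y) / r₂), 1,
    ⟨⟨?_, ?_, ?_, ?_⟩, ?_, ?_⟩, one_pos, ?_, ?_⟩
  · intro x y
    exact le_max_of_le_left (div_nonneg (m1pos _ _) hr₁.le)
  · intro x y
    beta_reduce
    constructor
    · intro h
      have h1 : d₁ (pl x) (pl y) / r₁ ≤ 0 := h ▸ le_max_left _ _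
      have h2 : d₂ (pr x) (pr y) / r₂ ≤ 0 := h ▸ le_max_right _ _
      have e1 : d₁ (pl x) (pl y) = 0 :=
        le_antisymm (by nlinarith [div_nonneg (m1pos (pl x) (pl y)) hr₁.le,
          (div_le_iff₀ hr₁).mp h1]) (m1pos _ _)
      have e2 : d₂ (pr x) (pr y) = 0 :=
        le_antisymm (by nlinarith [div_nonneg (m2pos (pr x) (pr y)) hr₂.le,
          (div_le_iff₀ hr₂).mp h2]) (m2pos _ _)
      exact eq_of_proj ((m1zero _ _).mp e1) ((m2zero _ _).mp e2)
    · rintro rfl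
      rw [(m1zero _ _).mpr rfl, (m2zero _ _).mpr rfl]
      simp
  · intro x y
    beta_reduce
    rw [m1symm, m2symm]
  · intro x y z
    beta_reduce
    apply max_le
    · calc d₁ (pl x) (pl z) / r₁ ≤ (d₁ (pl x) (pl y) + d₁ (pl y) (pl z)) / r₁ := by
            apply div_le_div_of_nonneg_right (m1tri _ _ _) hr₁.le |>.trans_eq rfl
          _ = d₁ (pl x) (pl y) / r₁ + d₁ (pl y) (pl z) / r₁ := add_div _ _ _
          _ ≤ _ := add_le_add (le_max_left _ _) (le_max_left _ _)
    · calc d₂ (pr x) (pr z) / r₂ ≤ (d₂ (pr x) (pr y) + d₂ (pr y) (pr z)) / r₂ := by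
            apply div_le_div_of_nonneg_right (m2tri _ _ _) hr₂.le |>.trans_eq rfl
          _ = d₂ (pr x) (pr y) / r₂ + d₂ (pr y) (pr z) / r₂ := add_div _ _ _
          _ ≤ _ := add_le_add (le_max_right _ _) (le_max_right _ _)
  · intro x y z
    beta_reduce
    have e1 : pl (x + z) = pl x + pl z := rfl
    have e2 : pl (y + z) = pl y + pl z := rfl
    have e3 : pr (x + z) = pr x + pr z := rfl
    have e4 : pr (y + z) = pr y + pr z := rfl
    rw [e1, e2, e3, e4, t1, t2]
  · intro x y hsub
    have hpl0 : pl (0 : V (n+m)) = 0 := rfl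
    have hpr0 : pr (0 : V (n+m)) = 0 := rfl
    have h1 : d₁ (pl x) 0 ≤ d₁ (pl y) 0 := by
      apply s1
      intro i hi
      exact hsub (show x (Fin.castAdd m i) ≠ 0 from hi)
    have h2 : d₂ (pr x) 0 ≤ d₂ (pr y) 0 := by
      apply s2
      intro j hj
      exact hsub (show x (Fin.natAdd n j) ≠ 0 from hj)
    rw [hpl0, hpr0] at *
    exact max_le_max (div_le_div_of_nonneg_right h1 hr₁.le)
      (div_le_div_of_nonneg_right h2 hr₂.le)
  · ext z
    simp only [Set.mem_iUnion, Set.mem_univ, iff_true]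
    have hz1 : (pl z) ∈ ⋃ c ∈ C₁, ball d₁ c r₁ := cov₁ ▸ Set.mem_univ _
    have hz2 : (pr z) ∈ ⋃ c ∈ C₂, ball d₂ c r₂ := cov₂ ▸ Set.mem_univ _
    simp only [Set.mem_iUnion] at hz1 hz2
    obtain ⟨c₁, hc₁, hb₁⟩ := hz1
    obtain ⟨c₂, hc₂, hb₂⟩ := hz2
    refine ⟨Fin.append c₁ c₂, ⟨c₁, hc₁, c₂, hc₂, rfl⟩, ?_⟩
    simp only [ball, Set.mem_setOf_eq, pl_append, pr_append]
    exact max_le ((div_le_one hr₁).mpr hb₁) ((div_le_one hr₂).mpr hb₂)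
  · rintro c ⟨a, ha, b, hb, rfl⟩ c' ⟨a', ha', b', hb', rfl⟩ hne
    simp only [Function.onFun]
    rw [Set.disjoint_left]
    rintro z hz hz'
    simp only [ball, Set.mem_setOf_eq, pl_append, pr_append] at hz hz'
    have hza : d₁ a (pl z) ≤ r₁ := (div_le_one hr₁).mp ((le_max_left _ _).trans hz)
    have hzb : d₂ b (pr z) ≤ r₂ := (div_le_one hr₂).mp ((le_max_right _ _).trans hz)
    have hza' : d₁ a' (pl z) ≤ r₁ := (div_le_one hr₁).mp ((le_max_left _ _).trans hz')
    have hzb' : d₂ b' (pr z) ≤ r₂ := (div_le_one hr₂).mp ((le_max_right _ _).trans hz')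
    have haa : a = a' := by
      by_contra h
      exact Set.disjoint_left.mp (dis₁ ha ha' h) hza hza'
    have hbb : b = b' := by
      by_contra h
      exact Set.disjoint_left.mp (dis₂ hb hb' h) hzb hzb'
    exact hne (by rw [haa, hbb])
end

section
/- Let $\mathcal{F}$ be a covering of $[n]$, let $r\ge 1$ be an integer, and let $D=B_{d_{\mathcal{F}}}(0,r)\subseteq\mathbb{F}_2^n$. Define the covering $\mathcal{F}(D)=\mathcal{F}\cup\{\mathrm{supp}(x) : x\in D,\ x\neq 0\}$ of $[n]$. Then $D=B_{d_{\mathcal{F}(D)}}(0,1)$. -/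
/-- `F` is a covering of the coordinate set. -/
def IsCovering {n : ℕ} (F : Set (Set (Fin n))) : Prop := ⋃₀ F = Set.univ

/-- The combinatorial weight associated with a family `F`. -/
noncomputable def combWeight {n : ℕ} (F : Set (Set (Fin n))) (x : V n) : ℕ :=
  sInf {k | ∃ A : Finset (Set (Fin n)), ↑A ⊆ F ∧
    supp x ⊆ ⋃₀ (↑A : Set (Set (Fin n))) ∧ A.card = k}

/-- The combinatorial metric associated with `F`. -/
noncomputable def combDist {n : ℕ} (F : Set (Set (Fin n))) (x y : V n) : ℕ :=
  combWeight F (x - y)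

/-- The ball of the combinatorial metric. -/
def combBall {n : ℕ} (F : Set (Set (Fin n))) (x : V n) (r : ℕ) : Set (V n) :=
  {y | combDist F x y ≤ r}

/-- The `(D, F)`-covering: `F` together with the supports of the nonzero
elements of `D`. -/
def coveringOf {n : ℕ} (F : Set (Set (Fin n))) (D : Set (V n)) :
    Set (Set (Fin n)) :=
  F ∪ {S | ∃ x ∈ D, x ≠ 0 ∧ S = supp x}

lemma supp_zero_sub {n : ℕ} (x : V n) : supp ((0 : V n) - x) = supp x := by
  ext i
  simp [supp, Pi.sub_apply, zero_sub, neg_eq_zero]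

lemma weightSet_nonempty {n : ℕ} {F : Set (Set (Fin n))} (hF : IsCovering F)
    (x : V n) :
    {k | ∃ A : Finset (Set (Fin n)), ↑A ⊆ F ∧
      supp x ⊆ ⋃₀ (↑A : Set (Set (Fin n))) ∧ A.card = k}.Nonempty := by
  classical
  have h : ∀ i : Fin n, ∃ t, t ∈ F ∧ i ∈ t := by
    intro i
    have : i ∈ ⋃₀ F := by rw [hF]; trivial
    simpa using this
  choose f hf1 hf2 using h
  refine ⟨(Finset.univ.image f).card, Finset.univ.image f, ?_, ?_, rfl⟩
  · intro t ht
    simp only [Finset.coe_image, Set.mem_image] at ht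
    obtain ⟨i, _, rfl⟩ := ht
    exact hf1 i
  · intro i _
    exact ⟨f i, by simp, hf2 i⟩

lemma weight_le_of_mem {n : ℕ} {F : Set (Set (Fin n))} {x : V n}
    {S : Set (Fin n)} (hS : S ∈ F) (hx : supp x ⊆ S) :
    combWeight F x ≤ 1 := by
  apply Nat.sInf_le
  exact ⟨{S}, by simpa using hS, by simpa using hx, Finset.card_singleton S⟩

lemma weight_zero {n : ℕ} (F : Set (Set (Fin n))) :
    combWeight F (0 : V n) = 0 := by
  have : combWeight F (0 : V n) ≤ 0 := by
    apply Nat.sInf_le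
    exact ⟨∅, by simp, by simp [supp], rfl⟩
  omega

lemma weight_mono {n : ℕ} {F : Set (Set (Fin n))} (hF : IsCovering F)
    {x y : V n} (h : supp x ⊆ supp y) :
    combWeight F x ≤ combWeight F y := by
  have hne := weightSet_nonempty hF y
  have hmem := Nat.sInf_mem hne
  obtain ⟨A, hAF, hcov, hcard⟩ := hmem
  apply Nat.sInf_le
  exact ⟨A, hAF, h.trans hcov, hcard⟩

theorem stmt_14 {n : ℕ} (F : Set (Set (Fin n))) (hF : IsCovering F)
    (r : ℕ) (hr : 1 ≤ r) :
    combBall F 0 r = combBall (coveringOf F (combBall F 0 r)) 0 1 := by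
  classical
  set D := combBall F 0 r with hD
  have hF' : IsCovering (coveringOf F D) := by
    unfold IsCovering coveringOf at *
    rw [Set.sUnion_union, hF]
    simp
  ext x
  constructor
  · intro hx
    by_cases hx0 : x = 0
    · subst hx0
      simp only [combBall, Set.mem_setOf_eq, combDist, sub_zero, weight_zero]
      omega
    · have hS : supp x ∈ coveringOf F D := Or.inr ⟨x, hx, hx0, rfl⟩
      have := weight_le_of_mem (x := (0 : V n) - x) hS
        (by rw [supp_zero_sub])
      simpa [combBall, combDist] using this
  · intro hx
    simp only [combBall, Set.mem_setOf_eq, combDist] at hx ⊢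
    have hne := weightSet_nonempty hF' ((0 : V n) - x)
    have hmem := Nat.sInf_mem hne
    obtain ⟨A, hAF, hcov, hcard⟩ := hmem
    have hA1 : A.card ≤ 1 := by
      rw [hcard]; exact hx
    rcases Finset.eq_empty_or_nonempty A with hA | ⟨a, ha⟩
    · subst hA
      simp only [Finset.coe_empty, Set.sUnion_empty, Set.subset_empty_iff] at hcov
      have hx0 : x = 0 := by
        funext i
        by_contra hne'
        have : i ∈ supp ((0 : V n) - x) := by
          rw [supp_zero_sub]; exact hne'
        rw [hcov] at this
        exact this
      subst hx0
      simp [hD, combBall, combDist, weight_zero]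
    · have hAa : A = {a} := by
        apply Finset.eq_singleton_iff_unique_mem.2
        refine ⟨ha, fun b hb => ?_⟩
        by_contra hne'
        have : 2 ≤ A.card := Finset.one_lt_card.2 ⟨b, hb, a, ha, hne'⟩
        omega
      subst hAa
      simp only [Finset.coe_singleton, Set.sUnion_singleton] at hcov
      have haF : a ∈ coveringOf F D := hAF (by simp)
      rcases haF with haF | ⟨y, hyD, hy0, rfl⟩
      · have := weight_le_of_mem (x := (0 : V n) - x) haF hcov
        exact le_trans this hr
      · rw [supp_zero_sub] at hcov
        have h1 : combWeight F ((0:V n) - x) ≤ combWeight F ((0:V n) - y) := by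
          apply weight_mono hF
          rw [supp_zero_sub, supp_zero_sub]
          exact hcov
        exact le_trans h1 hyD
end

section
/- The set $D=\{0,\ e_1,\ e_2,\ e_3,\ e_4,\ e_1+e_2,\ e_1+e_3,\ e_1+e_2+e_3\}\subseteq\mathbb{F}_2^4$ is not a ball $B_d(0,r)$ for any TS-metric $d$ on $\mathbb{F}_2^4$ and any $r>0$. -/
/-- The tile `{0, e₁, e₂, e₃, e₄, e₁+e₂, e₁+e₃, e₁+e₂+e₃} ⊆ 𝔽₂⁴`
(first line of Table 1). -/
def D16 : Set (V 4) :=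
  {0, e 0, e 1, e 2, e 3, e 0 + e 1, e 0 + e 2, e 0 + e 1 + e 2}

theorem stmt_16 :
    ¬ ∃ (d : V 4 → V 4 → ℝ) (r : ℝ), IsTSMetric d ∧ 0 < r ∧
      D16 = ball d 0 r := by
  rintro ⟨d, r, ⟨⟨_, _, hsymm, _⟩, _, hresp⟩, hr, hD⟩
  -- e 0 + e 1 + e 2 ∈ D16 = ball, so d 0 (e0+e1+e2) ≤ r
  have h1 : d 0 (e 0 + e 1 + e 2) ≤ r := by
    have : (e 0 + e 1 + e 2 : V 4) ∈ D16 := by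
      simp [D16]
    rw [hD] at this
    exact this
  have hsub : supp (e 1 + e 2 : V 4) ⊆ supp (e 0 + e 1 + e 2 : V 4) := by
    intro i hi
    fin_cases i <;> simp_all [supp, e, Pi.single, Function.update] <;> decide
  have h2 : d 0 (e 1 + e 2) ≤ r := by
    rw [hsymm]
    calc d (e 1 + e 2) 0 ≤ d (e 0 + e 1 + e 2) 0 := hresp _ _ hsub
      _ = d 0 (e 0 + e 1 + e 2) := hsymm _ _
      _ ≤ r := h1
  have hmem : (e 1 + e 2 : V 4) ∈ D16 := by rw [hD]; exact h2
  have : (e 1 + e 2 : V 4) ∉ D16 := by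
    simp only [D16, Set.mem_insert_iff, Set.mem_singleton_iff]
    push_neg
    refine ⟨?_, ?_, ?_, ?_, ?_, ?_, ?_, ?_⟩ <;> intro h <;>
      first
      | exact absurd (congrFun h 0) (by decide)
      | exact absurd (congrFun h 1) (by decide)
      | exact absurd (congrFun h 2) (by decide)
      | exact absurd (congrFun h 3) (by decide)
  exact this hmem
end

section
/- There is no covering $\mathcal{F}'$ of $[6]$ such that $B_{d_{\mathcal{F}'}}(0,2)=B_{d_H}(0,3)$ in $\mathbb{F}_2^6$, where $d_H$ is the Hamming metric; i.e., no combinatorial metric on $\mathbb{F}_2^6$ has its ball of radius $2$ about the origin equal to the Hamming ball of radius $3$ about the origin. -/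
/-- The Hamming ball of center `x` and radius `r`. -/
def hammingBall {n : ℕ} (x : V n) (r : ℕ) : Set (V n) :=
  {y | hammingDist x y ≤ r}

def ind (S : Finset (Fin 6)) : V 6 := fun i => if i ∈ S then 1 else 0

lemma supp_ind (S : Finset (Fin 6)) : supp (ind S) = ↑S := by
  ext i; simp [supp, ind]

lemma supp_neg {n : ℕ} (x : V n) : supp (-x) = supp x := by
  ext i; simp [supp]

lemma hdist_ind (S : Finset (Fin 6)) : hammingDist (0 : V 6) (ind S) = S.card := by
  rw [hammingDist_zero_left]
  unfold hammingNorm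
  congr 1
  ext i
  simp [ind]

lemma hnorm_ind (S : Finset (Fin 6)) : hammingNorm (ind S) = S.card := by
  rw [← hammingDist_zero_left, hdist_ind]

lemma combDist_zero (F : Set (Set (Fin 6))) (x : V 6) :
    combDist F 0 x = combWeight F x := by
  unfold combDist
  rw [zero_sub]
  unfold combWeight
  rw [supp_neg]

lemma two_cover_le (F : Set (Set (Fin 6))) {A B : Set (Fin 6)} (hA : A ∈ F) (hB : B ∈ F)
    (S : Finset (Fin 6)) (hS : ↑S ⊆ A ∪ B) : combWeight F (ind S) ≤ 2 := by
  classical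
  have hm : ({A, B} : Finset (Set (Fin 6))).card ∈
      {k | ∃ 𝒜 : Finset (Set (Fin 6)), ↑𝒜 ⊆ F ∧
        supp (ind S) ⊆ ⋃₀ (↑𝒜 : Set (Set (Fin 6))) ∧ 𝒜.card = k} := by
    refine ⟨{A, B}, ?_, ?_, rfl⟩
    · intro C hC
      simp only [Finset.coe_insert, Finset.coe_singleton, Set.mem_insert_iff,
        Set.mem_singleton_iff] at hC
      rcases hC with rfl | rfl <;> assumption
    · rw [supp_ind]
      intro i hi
      rcases hS hi with h | h
      · exact ⟨A, by simp, h⟩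
      · exact ⟨B, by simp, h⟩
  have := Nat.sInf_le hm
  refine this.trans ?_
  exact (Finset.card_insert_le _ _).trans (by simp)

lemma exists_cover {F : Set (Set (Fin 6))} (hcov : IsCovering F) (x : V 6) :
    ∃ 𝒜 : Finset (Set (Fin 6)), ↑𝒜 ⊆ F ∧ supp x ⊆ ⋃₀ (↑𝒜 : Set (Set (Fin 6))) ∧
      𝒜.card = combWeight F x := by
  classical
  have hex : ∀ i : Fin 6, ∃ A ∈ F, i ∈ A := by
    intro i
    have : i ∈ ⋃₀ F := by rw [hcov]; trivial
    exact this
  choose f hf1 hf2 using hex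
  have hne : {k | ∃ 𝒜 : Finset (Set (Fin 6)), ↑𝒜 ⊆ F ∧
      supp x ⊆ ⋃₀ (↑𝒜 : Set (Set (Fin 6))) ∧ 𝒜.card = k}.Nonempty := by
    refine ⟨(Finset.univ.image f).card, Finset.univ.image f, ?_, ?_, rfl⟩
    · intro C hC
      simp only [Finset.coe_image, Finset.coe_univ, Set.image_univ, Set.mem_range] at hC
      obtain ⟨i, rfl⟩ := hC
      exact hf1 i
    · intro i _
      exact ⟨f i, by simp, hf2 i⟩
  have := Nat.sInf_mem hne
  obtain ⟨𝒜, h1, h2, h3⟩ := this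
  exact ⟨𝒜, h1, h2, h3⟩

lemma pigeon (𝒜 : Finset (Set (Fin 6))) (h2 : 𝒜.card ≤ 2) (S : Finset (Fin 6))
    (h3 : S.card = 3) (hc : ↑S ⊆ ⋃₀ (↑𝒜 : Set (Set (Fin 6)))) :
    ∃ A ∈ 𝒜, ∃ T : Finset (Fin 6), T ⊆ S ∧ ↑T ⊆ A ∧ 2 ≤ T.card := by
  classical
  by_contra h
  push_neg at h
  have hle : ∀ A ∈ 𝒜, (S.filter (fun i => i ∈ A)).card ≤ 1 := by
    intro A hA
    by_contra hgt
    push_neg at hgt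
    exact absurd hgt.le (by
      have := h A hA (S.filter (fun i => i ∈ A)) (Finset.filter_subset _ _)
        (by intro i hi; simpa using (Finset.mem_filter.mp (by exact_mod_cast hi)).2)
      omega)
  have hsub : S ⊆ 𝒜.biUnion (fun A => S.filter (fun i => i ∈ A)) := by
    intro i hi
    obtain ⟨A, hA, hiA⟩ := hc (by exact_mod_cast hi)
    exact Finset.mem_biUnion.mpr ⟨A, hA, Finset.mem_filter.mpr ⟨hi, hiA⟩⟩
  have : S.card ≤ 𝒜.card * 1 := by
    calc S.card ≤ (𝒜.biUnion (fun A => S.filter (fun i => i ∈ A))).card :=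
          Finset.card_le_card hsub
      _ ≤ ∑ A ∈ 𝒜, (S.filter (fun i => i ∈ A)).card := Finset.card_biUnion_le
      _ ≤ ∑ A ∈ 𝒜, 1 := Finset.sum_le_sum hle
      _ = 𝒜.card * 1 := by simp
  omega

theorem stmt_19 :
    ¬ ∃ F : Set (Set (Fin 6)), IsCovering F ∧
      combBall F 0 2 = hammingBall (0 : V 6) 3 := by
  rintro ⟨F, hcov, hball⟩
  have hL1 : ∀ A ∈ F, ∀ B ∈ F, ∀ S : Finset (Fin 6), ↑S ⊆ A ∪ B → S.card ≤ 3 := by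
    intro A hA B hB S hS
    have h2 := two_cover_le F hA hB S hS
    have hmem : ind S ∈ combBall F 0 2 := by
      simpa [combBall, Set.mem_setOf_eq, combDist_zero] using h2
    rw [hball] at hmem
    simpa [hammingBall, Set.mem_setOf_eq, hdist_ind, hnorm_ind] using hmem
  have hL2 : ∀ S : Finset (Fin 6), S.card = 3 →
      ∃ A ∈ F, ∃ T : Finset (Fin 6), T ⊆ S ∧ ↑T ⊆ A ∧ 2 ≤ T.card := by
    intro S hS
    have hmem : ind S ∈ hammingBall (0 : V 6) 3 := by
      simp [hammingBall, Set.mem_setOf_eq, hdist_ind, hnorm_ind, hS]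
    rw [← hball] at hmem
    have hw : combWeight F (ind S) ≤ 2 := by
      simpa [combBall, Set.mem_setOf_eq, combDist_zero] using hmem
    obtain ⟨𝒜, h𝒜F, hcovS, hcard⟩ := exists_cover hcov (ind S)
    rw [supp_ind] at hcovS
    obtain ⟨A, hAmem, T, hT1, hT2, hT3⟩ := pigeon 𝒜 (by omega) S hS hcovS
    exact ⟨A, h𝒜F hAmem, T, hT1, hT2, hT3⟩
  obtain ⟨A1, hA1, T1, hT1S, hT1A, hT1c⟩ := hL2 {0, 1, 2} (by decide)
  obtain ⟨A2, hA2, T2, hT2S, hT2A, hT2c⟩ := hL2 {3, 4, 5} (by decide)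
  have hdisj : Disjoint T1 T2 :=
    Finset.disjoint_of_subset_left hT1S (Finset.disjoint_of_subset_right hT2S (by decide))
  have hsub : ↑(T1 ∪ T2) ⊆ A1 ∪ A2 := by
    intro i hi
    simp only [Finset.coe_union, Set.mem_union] at hi
    rcases hi with hi | hi
    · exact Or.inl (hT1A hi)
    · exact Or.inr (hT2A hi)
  have h3 := hL1 A1 hA1 A2 hA2 (T1 ∪ T2) hsub
  have h4 : 4 ≤ (T1 ∪ T2).card := by
    rw [Finset.card_union_of_disjoint hdisj]; omega
  omega
end
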